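/- arXiv:2202.12822 — 3 statements merged into one kernel-verified Lean document; each statement's English description precedes it below -/
import Mathlib

section
/- Along any solution of the flight dynamics model in the absence of wind shear (Ẇ(t) = 0 for all t), if the drag is strictly positive and the airspeed is strictly positive at some time t, then the specific total energy e(t) = z(t) + V(t)^2/(2g) is strictly decreasing at t, i.e., ė(t) = −D(t)·V(t)/(m·g) < 0; hence without wind gradient the system is dissipative. -/
/-- Without wind shear (`Ẇ ≡ 0`), with positive drag and airspeed at time `t`,
the specific total energy is strictly decreasing at `t`:
`ė(t) = −D(t)·V(t)/(m·g) < 0`. -/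
theorem specific_energy_dissipative_without_wind_shear
    (m g : ℝ) (hm : 0 < m) (hg : 0 < g)
    (z V γ ψ W D : ℝ → ℝ)
    (hz : Differentiable ℝ z) (hV : Differentiable ℝ V)
    (hγ : Differentiable ℝ γ) (hψ : Differentiable ℝ ψ)
    (hW : Differentiable ℝ W)
    (hzdot : ∀ t, deriv z t = V t * Real.sin (γ t))
    (hVdot : ∀ t, m * deriv V t =
      -D t - m * g * Real.sin (γ t) + m * deriv W t * Real.cos (γ t) * Real.sin (ψ t))
    (hWdot : ∀ t, deriv W t = 0)
    (t : ℝ) (hD : 0 < D t) (hVpos : 0 < V t) :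
    deriv (fun τ => z τ + (V τ) ^ 2 / (2 * g)) t = -(D t * V t) / (m * g) ∧
      deriv (fun τ => z τ + (V τ) ^ 2 / (2 * g)) t < 0 := by
  have hV' : deriv V t = (-D t - m * g * Real.sin (γ t)) / m := by
    have := hVdot t
    rw [hWdot t] at this
    field_simp at this ⊢
    linarith
  have hd : deriv (fun τ => z τ + (V τ) ^ 2 / (2 * g)) t
      = deriv z t + (2 * V t * deriv V t) / (2 * g) := by
    have h1 : DifferentiableAt ℝ (fun τ => (V τ) ^ 2 / (2 * g)) t := by
      exact (((hV t).pow 2).div_const _)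
    rw [deriv_fun_add (hz t) h1]
    congr 1
    rw [deriv_div_const]
    rw [deriv_fun_pow (hV t) 2]
    ring
  have heq : deriv (fun τ => z τ + (V τ) ^ 2 / (2 * g)) t = -(D t * V t) / (m * g) := by
    rw [hd, hzdot t, hV']
    field_simp
    ring
  refine ⟨heq, ?_⟩
  rw [heq]
  exact div_neg_of_neg_of_pos (neg_neg_of_pos (mul_pos hD hVpos)) (mul_pos hm hg)
end

section
/- Along any solution of the flight dynamics model with D(t) > 0 and V(t) > 0, if the specific total energy e(t) = z(t) + V(t)^2/(2g) is strictly increasing at time t (ė(t) > 0), then necessarily Ẇ(t)·cos γ(t)·sin ψ(t) > D(t)/m > 0; in particular energy can only be gained in the presence of a nonzero wind shear gradient. -/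
/-- With `D(t) > 0` and `V(t) > 0`, if the specific total energy is strictly
increasing at `t` then `Ẇ(t)·cos γ(t)·sin ψ(t) > D(t)/m > 0`: energy can only
be gained in the presence of a nonzero wind shear gradient. -/
theorem energy_gain_requires_wind_shear
    (m g : ℝ) (hm : 0 < m) (hg : 0 < g)
    (z V γ ψ W D : ℝ → ℝ)
    (hz : Differentiable ℝ z) (hV : Differentiable ℝ V)
    (hγ : Differentiable ℝ γ) (hψ : Differentiable ℝ ψ)
    (hW : Differentiable ℝ W)
    (hzdot : ∀ t, deriv z t = V t * Real.sin (γ t))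
    (hVdot : ∀ t, m * deriv V t =
      -D t - m * g * Real.sin (γ t) + m * deriv W t * Real.cos (γ t) * Real.sin (ψ t))
    (t : ℝ) (hD : 0 < D t) (hVpos : 0 < V t)
    (hgain : 0 < deriv (fun τ => z τ + (V τ) ^ 2 / (2 * g)) t) :
    deriv W t * Real.cos (γ t) * Real.sin (ψ t) > D t / m ∧ D t / m > 0 := by
  have hde : deriv (fun τ => z τ + (V τ) ^ 2 / (2 * g)) t
      = deriv z t + V t * deriv V t / g := by
    have h1 : HasDerivAt z (deriv z t) t := (hz t).hasDerivAt
    have h2 : HasDerivAt V (deriv V t) t := (hV t).hasDerivAt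
    have h3 : HasDerivAt (fun τ => z τ + (V τ) ^ 2 / (2 * g))
        (deriv z t + (2 * V t ^ 1 * deriv V t) / (2 * g)) t :=
      h1.add ((h2.pow 2).div_const (2 * g))
    rw [h3.deriv]
    field_simp
  have hVd : deriv V t = (-D t - m * g * Real.sin (γ t)
      + m * deriv W t * Real.cos (γ t) * Real.sin (ψ t)) / m := by
    field_simp
    linarith [hVdot t]
  rw [hde, hzdot t, hVd] at hgain
  have key : 0 < V t / g * (deriv W t * Real.cos (γ t) * Real.sin (ψ t) - D t / m) := by
    have : V t * Real.sin (γ t) +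
        V t * ((-D t - m * g * Real.sin (γ t)
          + m * deriv W t * Real.cos (γ t) * Real.sin (ψ t)) / m) / g
        = V t / g * (deriv W t * Real.cos (γ t) * Real.sin (ψ t) - D t / m) := by
      field_simp
      ring
    linarith [this ▸ hgain]
  have hpos : 0 < V t / g := div_pos hVpos hg
  have h := (mul_pos_iff_of_pos_left hpos).mp key
  exact ⟨by linarith, div_pos hD hm⟩
end

section
/- No energy-neutral dynamic soaring cycle exists without wind shear: if a solution of the flight dynamics model on an interval [t₀, t_f] with t₀ < t_f has Ẇ(t) = 0, D(t) > 0 and V(t) > 0 for all t ∈ [t₀, t_f], then z(t_f) + V(t_f)^2/(2g) < z(t₀) + V(t₀)^2/(2g); in particular the boundary conditions V(t_f) = V(t₀) and z(t_f) ≥ z(t₀) of a dynamic soaring cycle cannot both hold. -/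
/-- No energy-neutral dynamic soaring cycle exists without wind shear: if on
`[t₀, t_f]` one has `Ẇ = 0`, `D > 0` and `V > 0`, then the specific total energy
strictly decreases over the cycle, so the boundary conditions `V(t_f) = V(t₀)`
and `z(t_f) ≥ z(t₀)` cannot both hold. -/
theorem no_energy_neutral_cycle_without_wind_shear
    (m g : ℝ) (hm : 0 < m) (hg : 0 < g)
    (z V γ ψ W D : ℝ → ℝ)
    (hz : Differentiable ℝ z) (hV : Differentiable ℝ V)
    (hγ : Differentiable ℝ γ) (hψ : Differentiable ℝ ψ)
    (hW : Differentiable ℝ W)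
    (t₀ t_f : ℝ) (ht : t₀ < t_f)
    (hzdot : ∀ t ∈ Set.Icc t₀ t_f, deriv z t = V t * Real.sin (γ t))
    (hVdot : ∀ t ∈ Set.Icc t₀ t_f, m * deriv V t =
      -D t - m * g * Real.sin (γ t) + m * deriv W t * Real.cos (γ t) * Real.sin (ψ t))
    (hWdot : ∀ t ∈ Set.Icc t₀ t_f, deriv W t = 0)
    (hD : ∀ t ∈ Set.Icc t₀ t_f, 0 < D t)
    (hVpos : ∀ t ∈ Set.Icc t₀ t_f, 0 < V t) :
    z t_f + (V t_f) ^ 2 / (2 * g) < z t₀ + (V t₀) ^ 2 / (2 * g) ∧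
      ¬(V t_f = V t₀ ∧ z t₀ ≤ z t_f) := by
  set e : ℝ → ℝ := fun t => z t + (V t) ^ 2 / (2 * g) with he_def
  have he : Differentiable ℝ e := by
    apply hz.add
    exact Differentiable.div_const (by fun_prop) _
  have hderiv : ∀ t ∈ Set.Icc t₀ t_f, deriv e t = -(V t * D t) / (m * g) := by
    intro t htI
    have h1 : deriv e t = deriv z t + (2 * V t * deriv V t) / (2 * g) := by
      rw [he_def]
      rw [deriv_fun_add (hz t) (by fun_prop)]
      congr 1
      rw [deriv_div_const]
      congr 1
      rw [deriv_fun_pow (hV t)]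
      ring
    have hVd : deriv V t = (-D t - m * g * Real.sin (γ t)) / m := by
      have := hVdot t htI
      rw [hWdot t htI] at this
      field_simp at this ⊢
      linarith [this]
    rw [h1, hzdot t htI, hVd]
    field_simp
    ring
  have hanti : StrictAntiOn e (Set.Icc t₀ t_f) := by
    apply strictAntiOn_of_deriv_neg (convex_Icc _ _) he.continuous.continuousOn
    intro x hx
    rw [interior_Icc] at hx
    have hxI : x ∈ Set.Icc t₀ t_f := Set.mem_Icc_of_Ioo hx
    rw [hderiv x hxI]
    have := hVpos x hxI
    have := hD x hxI
    apply div_neg_of_neg_of_pos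
    · nlinarith
    · positivity
  have hlt : e t_f < e t₀ :=
    hanti (Set.left_mem_Icc.mpr ht.le) (Set.right_mem_Icc.mpr ht.le) ht
  refine ⟨hlt, fun ⟨hVeq, hzle⟩ => ?_⟩
  simp only [he_def, hVeq] at hlt
  linarith
end
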